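/- Under the energy-balance model for refrigerator door openings, the thermal time constant $\alpha_{op}$ during a door opening satisfies $\alpha_{op} \geq \alpha \cdot \left(1 + \frac{N^d}{\mu_{op}\mu_d}\, \xi\right)$, equivalently the open-door thermal resistance satisfies $R_{op} \leq R \cdot \left(1 + \frac{N^d}{\mu_{op}\mu_d}\, \xi\right)^{-1}$. -/

import Mathlib

/-- Proposition 4: under the energy-balance model for door openings,
`α_op ≥ α (1 + (N^d/(μ_op μ_d)) ξ)`, equivalently `R_op ≤ R (1 + (N^d/(μ_op μ_d)) ξ)⁻¹`. -/
theorem stmt9 (α αop β R Rop C ξ Nd μop μd Ta Tcl Top : ℝ)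
    (hα : α = 1 / (R * C)) (hαop : αop = 1 / (Rop * C))
    (hC : 0 < C) (hR : 0 < R) (hRop : 0 < Rop)
    (hμop : 0 < μop) (hμd : 0 < μd) (hξ : 0 < ξ) (hβ : 0 < β)
    (hNd : Nd = 86400) (hlt : μop * μd < Nd)
    (hT : Tcl ≤ Top) (hTa : Top < Ta)
    (hbal : (α / β) * (Ta - Tcl) * (Nd - μop * μd) + (αop / β) * (Ta - Top) * (μop * μd)
      = (1 + ξ) * (α / β) * (Ta - Tcl) * Nd) :
    α * (1 + Nd / (μop * μd) * ξ) ≤ αop ∧ Rop ≤ R * (1 + Nd / (μop * μd) * ξ)⁻¹ := by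
  have hμ : 0 < μop * μd := mul_pos hμop hμd
  have hNd0 : (0:ℝ) < Nd := by rw [hNd]; norm_num
  have hα0 : 0 < α := by rw [hα]; positivity
  have hTop : 0 < Ta - Top := sub_pos.2 hTa
  have hTcl : Ta - Top ≤ Ta - Tcl := by linarith
  have hbal' : α * (Ta - Tcl) * (Nd - μop * μd) + αop * (Ta - Top) * (μop * μd)
      = (1 + ξ) * α * (Ta - Tcl) * Nd := by
    field_simp at hbal
    linarith [hbal]
  have key : α * (μop * μd + Nd * ξ) ≤ αop * (μop * μd) := by
    have h2 : αop * (Ta - Top) * (μop * μd) = α * (Ta - Tcl) * (μop * μd + ξ * Nd) := by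
      linarith [hbal']
    have h3 : α * (Ta - Top) * (μop * μd + ξ * Nd) ≤ α * (Ta - Tcl) * (μop * μd + ξ * Nd) := by
      have hpos : 0 < μop * μd + ξ * Nd := by positivity
      have := mul_le_mul_of_nonneg_right (mul_le_mul_of_nonneg_left hTcl hα0.le) hpos.le
      nlinarith
    have h4 : α * (Ta - Top) * (μop * μd + ξ * Nd) ≤ αop * (Ta - Top) * (μop * μd) := by
      linarith
    nlinarith
  have hk : 0 < 1 + Nd / (μop * μd) * ξ := by positivity
  have h1 : α * (1 + Nd / (μop * μd) * ξ) ≤ αop := by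
    have e : α * (1 + Nd / (μop * μd) * ξ) = α * (μop * μd + Nd * ξ) / (μop * μd) := by
      field_simp
    rw [e, div_le_iff₀ hμ]
    linarith [key]
  refine ⟨h1, ?_⟩
  rw [← div_eq_mul_inv, le_div_iff₀ hk]
  rw [hα, hαop] at h1
  have hRC : 0 < R * C := mul_pos hR hC
  have hRopC : 0 < Rop * C := mul_pos hRop hC
  field_simp at h1
  replace h1 := mul_le_mul_of_nonneg_right h1 hC.le
  have e2 : 1 + Nd / (μop * μd) * ξ = (μop * μd + Nd * ξ) / (μop * μd) := by
    field_simp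
  rw [e2, ← mul_div_assoc, div_le_iff₀ hμ]
  have h1' : Rop * (μop * μd + Nd * ξ) * C ≤ R * (μop * μd) * C := by ring_nf; ring_nf at h1; linarith
  exact le_of_mul_le_mul_right h1' hC
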